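/- Let S = (s_0,…,s_{k-1}) be a cyclic binary sequence of length k whose n-windows form a covering code of radius R, with k odd. Define the k×k array A whose row i (0 ≤ i ≤ k-1) is the cyclic shift E^{T_i} S where T_i = Σ_{ℓ=0}^{i} ℓ = i(i+1)/2, i.e. A(i, j) = s_{(j + T_i) mod k}. Then for every 2×n binary matrix B = (X; Y) there exist row index r and column index c (rows taken modulo k) such that the 2×n window of A with entries A(r, c+t), A(r+1, c+t), 0 ≤ t < n, is within Hamming distance 2R of B. -/
import Mathlib


/-- Shift construction for odd `k`: let `s` be an `(n,R)`-covering sequence of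
length `k`, and form the `k × k` array whose row `i` is `s` shifted left by
`T_i = i(i+1)/2`. Then every `2 × n` binary matrix `(X; Y)` is within
Hamming distance `2R` of some `2 × n` window of the array. -/
theorem shifts_covering_2xn (k n R : ℕ) (hodd : Odd k)
    (s : ZMod k → ZMod 2)
    (hcov : ∀ x : Fin n → ZMod 2, ∃ i : ZMod k,
      hammingDist x (fun t : Fin n => s (i + (t : ℕ))) ≤ R) :
    ∀ X Y : Fin n → ZMod 2, ∃ r c : ℕ,
      hammingDist X (fun t : Fin n => s (((c + (t : ℕ) + r * (r + 1) / 2 : ℕ)) : ZMod k)) +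
      hammingDist Y (fun t : Fin n => s (((c + (t : ℕ) + (r + 1) * (r + 2) / 2 : ℕ)) : ZMod k))
        ≤ 2 * R := by
  intro X Y
  haveI : NeZero k := ⟨hodd.pos.ne'⟩
  obtain ⟨i, hi⟩ := hcov X
  obtain ⟨j, hj⟩ := hcov Y
  set r : ℕ := (j - i - 1).val with hrdef
  set c : ℕ := (i - ((r * (r + 1) / 2 : ℕ) : ZMod k)).val with hcdef
  refine ⟨r, c, ?_⟩
  have hr : ((r : ℕ) : ZMod k) = j - i - 1 := ZMod.natCast_rightInverse _
  have hc : ((c : ℕ) : ZMod k) = i - ((r * (r + 1) / 2 : ℕ) : ZMod k) :=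
    ZMod.natCast_rightInverse _
  have hT : (r + 1) * (r + 2) / 2 = r * (r + 1) / 2 + (r + 1) := by
    have h2 : (r + 1) * (r + 2) = r * (r + 1) + 2 * (r + 1) := by ring
    rw [h2, Nat.add_mul_div_left _ _ (by norm_num : 0 < 2)]
  have h1 : (fun t : Fin n => s (((c + (t : ℕ) + r * (r + 1) / 2 : ℕ)) : ZMod k))
      = fun t : Fin n => s (i + (t : ℕ)) := by
    funext t
    congr 1
    push_cast [hc, hr]
    ring
  have h2 : (fun t : Fin n => s (((c + (t : ℕ) + (r + 1) * (r + 2) / 2 : ℕ)) : ZMod k))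
      = fun t : Fin n => s (j + (t : ℕ)) := by
    funext t
    congr 1
    rw [hT, ← Nat.add_assoc]
    push_cast [hc, hr]
    ring
  rw [h1, h2]
  calc hammingDist X _ + hammingDist Y _ ≤ R + R := add_le_add hi hj
    _ = 2 * R := (two_mul R).symm
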